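/- Let X be a real n×p matrix and Σ a real symmetric positive definite n×n matrix. Assume XᵀX is invertible (equivalently, X has full column rank p); then XᵀΣ⁻¹X is also positive definite and invertible, and the p×p matrix (XᵀX)⁻¹ Xᵀ Σ X (XᵀX)⁻¹ − (XᵀΣ⁻¹X)⁻¹ is positive semidefinite. (This is the statement that the generalized least squares estimator is at least as efficient as the ordinary least squares estimator in a linear model with error covariance Σ.) -/

import Mathlib

open Matrix

/-- (GLS is at least as efficient as OLS.) If `X` is `n × p` with
`XᵀX` invertible and `Σ` is symmetric positive definite, then `XᵀΣ⁻¹X` is positive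
definite (hence invertible) and
`(XᵀX)⁻¹ XᵀΣX (XᵀX)⁻¹ - (XᵀΣ⁻¹X)⁻¹` is positive semidefinite. -/
theorem stmt_10 (n p : ℕ) (X : Matrix (Fin n) (Fin p) ℝ)
    (S : Matrix (Fin n) (Fin n) ℝ) (hS : S.PosDef)
    (hX : IsUnit (Xᵀ * X)) :
    (Xᵀ * S⁻¹ * X).PosDef ∧ IsUnit (Xᵀ * S⁻¹ * X) ∧
      ((Xᵀ * X)⁻¹ * (Xᵀ * S * X) * (Xᵀ * X)⁻¹ - (Xᵀ * S⁻¹ * X)⁻¹).PosSemidef := by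
  have hSinv : S⁻¹.PosDef := hS.inv
  have hXinj : ∀ v : Fin p → ℝ, v ≠ 0 → X *ᵥ v ≠ 0 := by
    intro v hv h
    apply hv
    have hinj := Matrix.mulVec_injective_iff_isUnit.mpr hX
    have h2 : (Xᵀ * X) *ᵥ v = (Xᵀ * X) *ᵥ 0 := by
      rw [Matrix.mulVec_zero, ← Matrix.mulVec_mulVec, h, Matrix.mulVec_zero]
    exact hinj h2
  have hK : (Xᵀ * S⁻¹ * X).PosDef := by
    have h1 : Xᵀ * S⁻¹ * X = Xᴴ * S⁻¹ * X := by
      rw [Matrix.conjTranspose_eq_transpose_of_trivial]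
    rw [h1]
    refine Matrix.PosDef.of_dotProduct_mulVec_pos (Matrix.isHermitian_conjTranspose_mul_mul X hSinv.isHermitian) fun x hx => ?_
    have := hSinv.dotProduct_mulVec_pos (hXinj x hx)
    simpa only [Matrix.star_mulVec, Matrix.dotProduct_mulVec, Matrix.vecMul_vecMul] using this
  refine ⟨hK, hK.isUnit, ?_⟩
  -- invertibility facts
  have hSu : IsUnit S := hS.isUnit
  have hKu : IsUnit (Xᵀ * S⁻¹ * X) := hK.isUnit
  have hSS : ∀ {m : Type} [Fintype m] (B : Matrix (Fin n) m ℝ), S * (S⁻¹ * B) = B := by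
    intro m _ B; rw [← Matrix.mul_assoc, Matrix.mul_nonsing_inv _ ((Matrix.isUnit_iff_isUnit_det _).mp hSu), Matrix.one_mul]
  have hSS' : ∀ {m : Type} [Fintype m] (B : Matrix (Fin n) m ℝ), S⁻¹ * (S * B) = B := by
    intro m _ B; rw [← Matrix.mul_assoc, Matrix.nonsing_inv_mul _ ((Matrix.isUnit_iff_isUnit_det _).mp hSu), Matrix.one_mul]
  have hAA : ∀ {m : Type} [Fintype m] (B : Matrix (Fin p) m ℝ), (Xᵀ * X)⁻¹ * (Xᵀ * (X * B)) = B := by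
    intro m _ B
    rw [← Matrix.mul_assoc Xᵀ X B, ← Matrix.mul_assoc,
      Matrix.nonsing_inv_mul _ ((Matrix.isUnit_iff_isUnit_det _).mp hX), Matrix.one_mul]
  have hKu' : IsUnit (Xᵀ * (S⁻¹ * X)).det := by
    rw [← Matrix.mul_assoc]; exact (Matrix.isUnit_iff_isUnit_det _).mp hKu
  have hKK : ∀ {m : Type} [Fintype m] (B : Matrix (Fin p) m ℝ), (Xᵀ * (S⁻¹ * X))⁻¹ * (Xᵀ * (S⁻¹ * (X * B))) = B := by
    intro m _ B
    rw [← Matrix.mul_assoc S⁻¹ X B, ← Matrix.mul_assoc Xᵀ (S⁻¹ * X) B, ← Matrix.mul_assoc,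
      Matrix.nonsing_inv_mul _ hKu', Matrix.one_mul]
  have hXA : Xᵀ * (X * (Xᵀ * X)⁻¹) = 1 := by
    rw [← Matrix.mul_assoc, Matrix.mul_nonsing_inv _ ((Matrix.isUnit_iff_isUnit_det _).mp hX)]
  have hSt : Sᵀ = S := by
    rw [← Matrix.conjTranspose_eq_transpose_of_trivial]; exact hS.isHermitian
  have hKt : (Xᵀ * S⁻¹ * X)ᵀ = Xᵀ * S⁻¹ * X := by
    rw [← Matrix.conjTranspose_eq_transpose_of_trivial]; exact hK.isHermitian
  have hSit : S⁻¹ᵀ = S⁻¹ := by rw [Matrix.transpose_nonsing_inv, hSt]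
  have key := hS.posSemidef.conjTranspose_mul_mul_same
    (X * (Xᵀ * X)⁻¹ - S⁻¹ * X * (Xᵀ * S⁻¹ * X)⁻¹)
  have heq : (X * (Xᵀ * X)⁻¹ - S⁻¹ * X * (Xᵀ * S⁻¹ * X)⁻¹)ᴴ * S *
        (X * (Xᵀ * X)⁻¹ - S⁻¹ * X * (Xᵀ * S⁻¹ * X)⁻¹)
      = (Xᵀ * X)⁻¹ * (Xᵀ * S * X) * (Xᵀ * X)⁻¹ - (Xᵀ * S⁻¹ * X)⁻¹ := by
    simp only [Matrix.conjTranspose_eq_transpose_of_trivial, Matrix.transpose_sub,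
      Matrix.transpose_mul, Matrix.transpose_nonsing_inv, Matrix.transpose_transpose,
      hSt, hSit, hKt]
    simp only [Matrix.sub_mul, Matrix.mul_sub, Matrix.mul_assoc, hSS, hSS', hAA, hKK, hXA,
      Matrix.mul_one]
    abel
  rw [heq] at key
  exact key
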